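/- arXiv:1807.03395 — 2 statements merged into one kernel-verified Lean document; each statement's English description precedes it below -/
import Mathlib

section
/- For real numbers a > b > 0, a positive integer l, and any natural number i ≤ l, the coefficient of x^i in the polynomial (1 + a·x)·(1 + b·x)^{l-1} is at most the coefficient of x^i in (1 + (a/l + (l-1)·b/l)·x)^l. -/
open Polynomial

lemma pow_aux (b d : ℝ) (hb : 0 ≤ b) (hd : 0 ≤ d) :
    ∀ n : ℕ, b ^ n * (b + (n + 1) * d) ≤ (b + d) ^ (n + 1) := by
  intro n
  induction n with
  | zero => simp
  | succ n ih =>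
    have h2 : (b + d) * (b ^ n * (b + (n + 1) * d)) ≤ (b + d) * (b + d) ^ (n + 1) :=
      mul_le_mul_of_nonneg_left ih (by linarith)
    have h3 : 0 ≤ b ^ n := pow_nonneg hb n
    have h4 : (b + d) ^ (n + 1 + 1) = (b + d) * (b + d) ^ (n + 1) := by ring
    have h6 : (0:ℝ) ≤ (n:ℝ) := Nat.cast_nonneg n
    have h5 : b ^ (n + 1) * (b + ((n:ℝ) + 1 + 1) * d)
        ≤ (b + d) * (b ^ n * (b + ((n:ℝ) + 1) * d)) := by
      rw [pow_succ]
      nlinarith [mul_nonneg h3 (mul_nonneg hd hd),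
        mul_nonneg (mul_nonneg h3 h6) (mul_nonneg hd hd)]
    push_cast
    push_cast at h5
    linarith
lemma coeff_one_add_C_mul_X_pow (c : ℝ) (hc : c ≠ 0) (n k : ℕ) :
    ((1 + C c * X) ^ n).coeff k = n.choose k * c ^ k := by
  have h : (1 + C c * X : ℝ[X]) = C c * (X + C c⁻¹) := by
    rw [mul_add, ← C_mul, mul_inv_cancel₀ hc, C_1]; ring
  rw [h, mul_pow, ← C_pow, coeff_C_mul, coeff_X_add_C_pow]
  rcases le_or_gt k n with hk | hk
  · have : c ^ n = c ^ (n - k) * c ^ k := by rw [← pow_add, Nat.sub_add_cancel hk]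
    rw [this, inv_pow]
    field_simp
  · simp [Nat.choose_eq_zero_of_lt hk]

lemma key (a b : ℝ) (hab : b ≤ a) (hb : 0 < b) (k j : ℕ) :
    a * (k.choose j * b ^ j) + k.choose (j + 1) * b ^ (j + 1) ≤
      (k + 1).choose (j + 1) * (a / ((k : ℝ) + 1) + (k : ℝ) * b / ((k : ℝ) + 1)) ^ (j + 1) := by
  set L : ℝ := (k : ℝ) + 1 with hL_def
  have hlR : (0 : ℝ) < L := by positivity
  set d : ℝ := (a - b) / L with hd_def
  have hd : 0 ≤ d := div_nonneg (by linarith) hlR.le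
  have hm : a / L + (k : ℝ) * b / L = b + d := by
    rw [hd_def, hL_def]
    field_simp
    ring
  have h1n : (k + 1) * k.choose j = (k + 1).choose (j + 1) * (j + 1) := Nat.add_one_mul_choose_eq k j
  have h1 : L * k.choose j = (k + 1).choose (j + 1) * ((j : ℝ) + 1) := by
    rw [hL_def]; exact_mod_cast congrArg (Nat.cast : ℕ → ℝ) h1n
  have h2n : (k + 1).choose (j + 1) = k.choose j + k.choose (j + 1) := Nat.choose_succ_succ k j
  have h2 : ((k + 1).choose (j + 1) : ℝ) = k.choose j + k.choose (j + 1) := by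
    exact_mod_cast congrArg (Nat.cast : ℕ → ℝ) h2n
  have e1 : L * (a * (k.choose j * b ^ j) + k.choose (j + 1) * b ^ (j + 1))
      = (k + 1).choose (j + 1) * (b ^ j * (L * b + ((j : ℝ) + 1) * (a - b))) := by
    linear_combination (a * b ^ j - b ^ (j + 1)) * h1 - (L * b ^ (j + 1)) * h2
  have hkey : b ^ j * (b + ((j : ℝ) + 1) * d) ≤ (b + d) ^ (j + 1) := pow_aux b d hb.le hd j
  have e2 : L * b + ((j : ℝ) + 1) * (a - b) = L * (b + ((j : ℝ) + 1) * d) := by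
    rw [hd_def]
    field_simp
  have hC : (0 : ℝ) ≤ (k + 1).choose (j + 1) := by positivity
  have main : L * (a * (k.choose j * b ^ j) + k.choose (j + 1) * b ^ (j + 1))
      ≤ L * ((k + 1).choose (j + 1) * (b + d) ^ (j + 1)) := by
    rw [e1, e2]
    have h7 := mul_le_mul_of_nonneg_left hkey hC
    nlinarith [h7, hlR]
  rw [hm]
  have := (mul_le_mul_iff_right₀ hlR).mp main
  linarith

theorem coeff_le (a b : ℝ) (hab : a > b) (hb : b > 0) (l : ℕ) (hl : 0 < l)
    (i : ℕ) (hi : i ≤ l) :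
    ((1 + C a * X) * (1 + C b * X) ^ (l - 1)).coeff i ≤
      ((1 + C (a / l + ((l : ℝ) - 1) * b / l) * X) ^ l).coeff i := by
  obtain ⟨k, rfl⟩ : ∃ k, l = k + 1 := ⟨l - 1, (Nat.succ_pred_eq_of_pos hl).symm⟩
  have hlR : (0 : ℝ) < ((k : ℝ) + 1) := by positivity
  have hcast : ((k + 1 : ℕ) : ℝ) = (k : ℝ) + 1 := by push_cast; ring
  have hmeq : a / ((k + 1 : ℕ) : ℝ) + (((k + 1 : ℕ) : ℝ) - 1) * b / ((k + 1 : ℕ) : ℝ)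
      = a / ((k : ℝ) + 1) + (k : ℝ) * b / ((k : ℝ) + 1) := by
    rw [hcast]; ring_nf
  have hm : (0 : ℝ) < a / ((k + 1 : ℕ) : ℝ) + (((k + 1 : ℕ) : ℝ) - 1) * b / ((k + 1 : ℕ) : ℝ) := by
    rw [hmeq]
    have ha : (0:ℝ) < a := lt_trans hb hab
    positivity
  rw [coeff_one_add_C_mul_X_pow _ hm.ne' (k + 1) i]
  have expand : (1 + C a * X) * (1 + C b * X) ^ (k + 1 - 1)
      = (1 + C b * X) ^ k + C a * (X * (1 + C b * X) ^ k) := by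
    rw [Nat.add_sub_cancel]; ring
  rw [expand]
  cases i with
  | zero =>
    simp [coeff_one_add_C_mul_X_pow b hb.ne' k 0]
  | succ j =>
    rw [coeff_add, coeff_C_mul, coeff_X_mul,
      coeff_one_add_C_mul_X_pow b hb.ne' k (j + 1),
      coeff_one_add_C_mul_X_pow b hb.ne' k j]
    have hk := key a b hab.le hb k j
    rw [hmeq]
    linarith
end

section
/- For any c > 1 with m and m/c positive integers, and any α ≥ 0, the sum over l from 0 to m/c of e^{-α l} · C(m/c, l) · C(m - m/c, m/c - l) is at most C(m, m/c) · (1 - 1/c + e^{-α}/c)^{m/c}. -/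
open Finset

lemma wv_vander (n s : ℕ) :
    ∑ l ∈ range (s+1), s.choose l * n.choose (s-l) = (s+n).choose s := by
  rw [Nat.add_choose_eq, Finset.Nat.sum_antidiagonal_eq_sum_range_succ_mk]

lemma wv_V1 (n s : ℕ) :
    ∑ l ∈ range (s+1+1), l * ((s+1).choose l * n.choose (s+1-l))
      = (s+1) * (s+n).choose s := by
  rw [Finset.sum_range_succ']
  simp only [Nat.zero_eq, zero_mul, add_zero]
  have key : ∀ j, (j+1) * ((s+1).choose (j+1) * n.choose (s+1-(j+1)))
      = (s+1) * (s.choose j * n.choose (s-j)) := by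
    intro j
    have h := Nat.add_one_mul_choose_eq s j
    have hsub : s + 1 - (j+1) = s - j := by omega
    rw [hsub]
    calc (j+1) * ((s+1).choose (j+1) * n.choose (s-j))
        = ((s+1).choose (j+1) * (j+1)) * n.choose (s-j) := by ring
      _ = ((s+1) * s.choose j) * n.choose (s-j) := by rw [← h]
      _ = (s+1) * (s.choose j * n.choose (s-j)) := by ring
  calc ∑ j ∈ range (s+1), (j+1) * ((s+1).choose (j+1) * n.choose (s+1-(j+1)))
      = ∑ j ∈ range (s+1), (s+1) * (s.choose j * n.choose (s-j)) :=
        Finset.sum_congr rfl (fun j _ => key j)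
    _ = (s+1) * ∑ j ∈ range (s+1), s.choose j * n.choose (s-j) := by rw [Finset.mul_sum]
    _ = (s+1) * (s+n).choose s := by rw [wv_vander]

-- inner comparison: s*C(n,j) vs n*C(n,j-1), for 1 ≤ j ≤ s
lemma wv_innerA (n s j : ℕ) (hj : 1 ≤ j) (hjs : j ≤ s)
    (h : (n+s)*(s-j) ≤ s*(s-1)) :
    s * n.choose j ≤ n * n.choose (j-1) := by
  by_cases hjn : j - 1 ≤ n
  · have hC : 0 < n.choose (j-1) := Nat.choose_pos hjn
    have E2 : n.choose j * j = n.choose (j-1) * (n-(j-1)) := by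
      have := Nat.choose_succ_right_eq n (j-1)
      have hj1 : j - 1 + 1 = j := by omega
      rwa [hj1] at this
    have hmul : s * n.choose j * j ≤ n * n.choose (j-1) * j := by
      have h1 : s * n.choose j * j = n.choose (j-1) * (s * (n-(j-1))) := by
        rw [mul_assoc, E2]; ring
      have h2 : n * n.choose (j-1) * j = n.choose (j-1) * (n * j) := by ring
      rw [h1, h2]
      apply Nat.mul_le_mul_left
      -- s * (n - (j-1)) ≤ n * j
      have hs1 : 1 ≤ s := le_trans hj hjs
      zify [hjn, hj]
      zify [hjs, hs1] at h
      nlinarith [h]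
    exact Nat.le_of_mul_le_mul_right hmul (by omega)
  · have h0 : n.choose j = 0 := Nat.choose_eq_zero_of_lt (by omega)
    have h1 : n.choose (j-1) = 0 := Nat.choose_eq_zero_of_lt (by omega)
    simp [h0, h1]

lemma wv_innerB (n s j : ℕ) (hj : 1 ≤ j) (hjs : j ≤ s)
    (h : s*(s-1) < (n+s)*(s-j)) :
    n * n.choose (j-1) ≤ s * n.choose j := by
  by_cases hjn : j - 1 ≤ n
  · have hC : 0 < n.choose (j-1) := Nat.choose_pos hjn
    have E2 : n.choose j * j = n.choose (j-1) * (n-(j-1)) := by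
      have := Nat.choose_succ_right_eq n (j-1)
      have hj1 : j - 1 + 1 = j := by omega
      rwa [hj1] at this
    have hmul : n * n.choose (j-1) * j ≤ s * n.choose j * j := by
      have h1 : s * n.choose j * j = n.choose (j-1) * (s * (n-(j-1))) := by
        rw [mul_assoc, E2]; ring
      have h2 : n * n.choose (j-1) * j = n.choose (j-1) * (n * j) := by ring
      rw [h1, h2]
      apply Nat.mul_le_mul_left
      have hs1 : 1 ≤ s := le_trans hj hjs
      zify [hjn, hj]
      zify [hjs, hs1] at h
      nlinarith [h]
    exact Nat.le_of_mul_le_mul_right hmul (by omega)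
  · have h0 : n.choose j = 0 := Nat.choose_eq_zero_of_lt (by omega)
    have h1 : n.choose (j-1) = 0 := Nat.choose_eq_zero_of_lt (by omega)
    simp [h0, h1]

lemma wv_signA (n s l : ℕ) (hl : l < s) (h : (n+s)*l ≤ s*(s-1)) :
    s*(s-l)*(s.choose l * n.choose (s-l)) ≤ n*(l+1)*(s.choose (l+1) * n.choose (s-(l+1))) := by
  have E1 := Nat.choose_succ_right_eq s l
  have hj1 : s - (l+1) = (s-l) - 1 := by omega
  have hinner := wv_innerA n s (s-l) (by omega) (by omega) (by rw [show s-(s-l) = l by omega]; exact h)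
  calc s*(s-l)*(s.choose l * n.choose (s-l))
      = (s.choose l * (s-l)) * (s * n.choose (s-l)) := by ring
    _ ≤ (s.choose l * (s-l)) * (n * n.choose ((s-l)-1)) := Nat.mul_le_mul_left _ hinner
    _ = (s.choose (l+1) * (l+1)) * (n * n.choose ((s-l)-1)) := by rw [E1]
    _ = n*(l+1)*(s.choose (l+1) * n.choose (s-(l+1))) := by rw [hj1]; ring

lemma wv_signB (n s l : ℕ) (hl : l < s) (h : s*(s-1) < (n+s)*l) :
    n*(l+1)*(s.choose (l+1) * n.choose (s-(l+1))) ≤ s*(s-l)*(s.choose l * n.choose (s-l)) := by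
  have E1 := Nat.choose_succ_right_eq s l
  have hj1 : s - (l+1) = (s-l) - 1 := by omega
  have hinner := wv_innerB n s (s-l) (by omega) (by omega) (by rw [show s-(s-l) = l by omega]; exact h)
  calc n*(l+1)*(s.choose (l+1) * n.choose (s-(l+1)))
      = (s.choose (l+1) * (l+1)) * (n * n.choose ((s-l)-1)) := by rw [hj1]; ring
    _ = (s.choose l * (s-l)) * (n * n.choose ((s-l)-1)) := by rw [E1]
    _ ≤ (s.choose l * (s-l)) * (s * n.choose (s-l)) := Nat.mul_le_mul_left _ hinner
    _ = s*(s-l)*(s.choose l * n.choose (s-l)) := by ring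

lemma wv_pivot (N L : ℕ) (c : ℕ → ℝ) (t : ℝ) (ht0 : 0 ≤ t) (ht1 : t ≤ 1)
    (hsum : ∑ l ∈ range N, c l = 0)
    (hpos : ∀ l ∈ range N, l ≤ L → 0 ≤ c l)
    (hneg : ∀ l ∈ range N, L < l → c l ≤ 0) :
    0 ≤ ∑ l ∈ range N, c l * t^l := by
  have step : ∀ l ∈ range N, c l * t^L ≤ c l * t^l := by
    intro l hl
    by_cases hcase : l ≤ L
    · exact mul_le_mul_of_nonneg_left (pow_le_pow_of_le_one ht0 ht1 hcase) (hpos l hl hcase)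
    · push_neg at hcase
      exact mul_le_mul_of_nonpos_left (pow_le_pow_of_le_one ht0 ht1 (le_of_lt hcase)) (hneg l hl hcase)
  calc (0:ℝ) = (∑ l ∈ range N, c l) * t^L := by rw [hsum, zero_mul]
    _ = ∑ l ∈ range N, c l * t^L := by rw [Finset.sum_mul]
    _ ≤ ∑ l ∈ range N, c l * t^l := Finset.sum_le_sum step

lemma wv_sumB (n s : ℕ) (hs : 0 < s) :
    (n+s) * (∑ l ∈ range (s+1), l * (s.choose l * n.choose (s-l)))
      = s * s * ((s+n).choose s) := by
  obtain ⟨r, rfl⟩ : ∃ r, s = r + 1 := ⟨s - 1, by omega⟩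
  rw [wv_V1]
  have h := Nat.add_one_mul_choose_eq (r+n) r
  have e1 : r + n + 1 = n + (r+1) := by omega
  have e2 : r + n + 1 = r + 1 + n := by omega
  calc (n + (r+1)) * ((r+1) * (r+n).choose r)
      = (r+1) * ((r+n+1) * (r+n).choose r) := by rw [e1]; ring
    _ = (r+1) * ((r+n+1).choose (r+1) * (r+1)) := by rw [h]
    _ = (r+1) * (r+1) * (r+1+n).choose (r+1) := by rw [e2]; ring

lemma wv_key (n s : ℕ) (hn : 0 < n) (hs : 0 < s) (t : ℝ) (ht0 : 0 ≤ t) (ht1 : t ≤ 1) :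
    (s:ℝ)^2 * (∑ l ∈ range (s+1), (s.choose l : ℝ) * (n.choose (s-l) : ℝ) * t^l)
      ≤ ((n:ℝ) + s*t) * (∑ l ∈ range (s+1), (s.choose l : ℝ) * (n.choose (s-l) : ℝ) * (l * t^(l-1))) := by
  set a : ℕ → ℝ := fun l => (s.choose l : ℝ) * (n.choose (s-l) : ℝ) with ha
  have haszero : a (s+1) = 0 := by
    simp only [ha, Nat.choose_eq_zero_of_lt (by omega : s < s+1), Nat.cast_zero, zero_mul]
  -- reindex the derivative sum
  have hg : ∑ l ∈ range (s+1), a l * (l * t^(l-1))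
      = ∑ l ∈ range (s+1), ((l:ℝ)+1) * a (l+1) * t^l := by
    rw [Finset.sum_range_succ' (fun l => a l * (l * t^(l-1))) s]
    rw [Finset.sum_range_succ (fun l => ((l:ℝ)+1) * a (l+1) * t^l) s]
    rw [haszero]
    simp only [Nat.cast_zero, zero_mul, mul_zero, add_zero, Nat.add_sub_cancel]
    exact Finset.sum_congr rfl (fun l _ => by push_cast; ring)
  -- shifting identity, for any u
  have hshift : ∀ u : ℝ, ∑ l ∈ range (s+1), ((l:ℝ)+1) * a (l+1) * u^(l+1)
      = ∑ l ∈ range (s+1), (l:ℝ) * a l * u^l := by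
    intro u
    have h1 := Finset.sum_range_succ' (fun l => (l:ℝ) * a l * u^l) (s+1)
    have h2 := Finset.sum_range_succ (fun l => (l:ℝ) * a l * u^l) (s+1)
    simp only [Nat.cast_zero, zero_mul, add_zero, haszero, mul_zero] at h1 h2
    rw [h2] at h1
    rw [h1]
    exact Finset.sum_congr rfl (fun l _ => by push_cast; ring)
  rw [hg, ← sub_nonneg]
  have hst : ((n:ℝ) + s*t) * (∑ l ∈ range (s+1), ((l:ℝ)+1) * a (l+1) * t^l)
      - (s:ℝ)^2 * (∑ l ∈ range (s+1), a l * t^l)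
      = ∑ l ∈ range (s+1),
          ((n:ℝ) * ((l:ℝ)+1) * a (l+1) + (s:ℝ) * l * a l - (s:ℝ)^2 * a l) * t^l := by
    have e1 : ((n:ℝ) + s*t) * (∑ l ∈ range (s+1), ((l:ℝ)+1) * a (l+1) * t^l)
        = (∑ l ∈ range (s+1), (n:ℝ) * (((l:ℝ)+1) * a (l+1)) * t^l)
          + (s:ℝ) * (∑ l ∈ range (s+1), ((l:ℝ)+1) * a (l+1) * t^(l+1)) := by
      rw [Finset.mul_sum, Finset.mul_sum, ← Finset.sum_add_distrib]
      exact Finset.sum_congr rfl (fun l _ => by ring)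
    rw [e1, hshift t, Finset.mul_sum, Finset.mul_sum, ← Finset.sum_add_distrib,
      ← Finset.sum_sub_distrib]
    exact Finset.sum_congr rfl (fun l _ => by ring)
  rw [hst]
  -- apply the pivot lemma
  set c : ℕ → ℝ := fun l => (n:ℝ) * ((l:ℝ)+1) * a (l+1) + (s:ℝ) * l * a l - (s:ℝ)^2 * a l with hc
  have hsum : ∑ l ∈ range (s+1), c l = 0 := by
    have hB : ∑ l ∈ range (s+1), ((l:ℝ)+1) * a (l+1) = ∑ l ∈ range (s+1), (l:ℝ) * a l := by
      have := hshift 1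
      simpa using this
    have hsplit : ∑ l ∈ range (s+1), c l
        = (n:ℝ) * (∑ l ∈ range (s+1), ((l:ℝ)+1) * a (l+1))
          + (s:ℝ) * (∑ l ∈ range (s+1), (l:ℝ) * a l)
          - (s:ℝ)^2 * (∑ l ∈ range (s+1), a l) := by
      rw [Finset.mul_sum, Finset.mul_sum, Finset.mul_sum, ← Finset.sum_add_distrib,
        ← Finset.sum_sub_distrib]
      exact Finset.sum_congr rfl (fun l _ => by simp only [hc]; ring)
    rw [hsplit, hB]
    have e2 : ((∑ l ∈ range (s+1), l * (s.choose l * n.choose (s-l)) : ℕ) : ℝ)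
        = ∑ l ∈ range (s+1), (l:ℝ) * a l := by
      push_cast
      exact Finset.sum_congr rfl (fun l _ => by simp only [ha])
    have hBr : ((n:ℝ)+s) * (∑ l ∈ range (s+1), (l:ℝ) * a l)
        = (s:ℝ) * s * ((s+n).choose s : ℝ) := by
      rw [← e2]
      have hcast := congrArg (fun k : ℕ => (k : ℝ)) (wv_sumB n s hs)
      push_cast at hcast
      push_cast
      linarith [hcast]
    have hAr : (∑ l ∈ range (s+1), a l) = ((s+n).choose s : ℝ) := by
      have hcast := congrArg (fun k : ℕ => (k : ℝ)) (wv_vander n s)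
      push_cast at hcast
      rw [← hcast]
      all_goals exact Finset.sum_congr rfl (fun l _ => by simp only [ha])
    rw [hAr]
    nlinarith [hBr]
  apply wv_pivot (s+1) (s*(s-1)/(n+s)) c t ht0 ht1 hsum
  · -- positivity below threshold
    intro l hl hle
    have hmul : (n+s)*l ≤ s*(s-1) := by
      have := (Nat.le_div_iff_mul_le (by omega : 0 < n+s)).mp hle
      linarith [Nat.mul_comm l (n+s)]
    have hlt : l < s := by
      rcases Nat.lt_or_ge l s with h' | h'
      · exact h'
      · exfalso
        have hls : l = s := by simp only [Finset.mem_range] at hl; omega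
        rw [hls] at hmul
        have h2 : s * (s-1) + s * 1 = s * s := by
          rw [← Nat.mul_add]; congr 1; omega
        nlinarith [hmul, h2, hn, hs]
    have h := wv_signA n s l hlt hmul
    have h' : (↑(s*(s-l)*(s.choose l * n.choose (s-l))) : ℝ)
        ≤ ↑(n*(l+1)*(s.choose (l+1) * n.choose (s-(l+1)))) := Nat.cast_le.mpr h
    push_cast [Nat.cast_sub hlt.le] at h'
    have hceq : c l = ((n:ℝ)*(l+1)*((s.choose (l+1):ℝ) * (n.choose (s-(l+1)):ℝ)))
        - ((s:ℝ)*((s:ℝ)-(l:ℝ))*((s.choose l:ℝ) * (n.choose (s-l):ℝ))) := by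
      simp only [hc, ha]; ring
    rw [hceq]
    linarith [h']
  · -- nonpositivity above threshold
    intro l hl hgt
    have hmul : s*(s-1) < (n+s)*l := by
      by_contra hcon
      push_neg at hcon
      have := (Nat.le_div_iff_mul_le (by omega : 0 < n+s)).mpr
        (by linarith [Nat.mul_comm l (n+s)] : l*(n+s) ≤ s*(s-1))
      omega
    rcases Nat.lt_or_ge l s with hlt | hge
    · have h := wv_signB n s l hlt hmul
      have h' : (↑(n*(l+1)*(s.choose (l+1) * n.choose (s-(l+1)))) : ℝ)
          ≤ ↑(s*(s-l)*(s.choose l * n.choose (s-l))) := Nat.cast_le.mpr h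
      push_cast [Nat.cast_sub hlt.le] at h'
      have hceq : c l = ((n:ℝ)*(l+1)*((s.choose (l+1):ℝ) * (n.choose (s-(l+1)):ℝ)))
          - ((s:ℝ)*((s:ℝ)-(l:ℝ))*((s.choose l:ℝ) * (n.choose (s-l):ℝ))) := by
        simp only [hc, ha]; ring
      rw [hceq]
      linarith [h']
    · have hls : l = s := by simp only [Finset.mem_range] at hl; omega
      have : c l = 0 := by
        rw [hls]
        simp only [hc, haszero]
        push_cast
        ring
      rw [this]

lemma wv_final (n s : ℕ) (hn : 0 < n) (hs : 0 < s) (t : ℝ) (ht0 : 0 < t) (ht1 : t ≤ 1) :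
    ∑ l ∈ range (s+1), (s.choose l : ℝ) * (n.choose (s-l) : ℝ) * t^l
      ≤ ((s+n).choose s : ℝ) * (((n:ℝ) + s*t)/((n:ℝ)+s))^s := by
  set a : ℕ → ℝ := fun l => (s.choose l : ℝ) * (n.choose (s-l) : ℝ) with ha
  set f : ℝ → ℝ := fun x => ∑ l ∈ range (s+1), a l * x^l with hf
  set g : ℝ → ℝ := fun x => ∑ l ∈ range (s+1), a l * ((l:ℝ) * x^(l-1)) with hgdef
  set u : ℝ → ℝ := fun x => (n:ℝ) + s*x with hu
  have hu_pos : ∀ x : ℝ, 0 ≤ x → 0 < u x := by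
    intro x hx
    have : (0:ℝ) < n := by exact_mod_cast hn
    have : (0:ℝ) ≤ (s:ℝ)*x := by positivity
    simp only [hu]; linarith
  have hfd : ∀ x : ℝ, HasDerivAt f (g x) x := by
    intro x
    simp only [hf, hgdef]
    apply HasDerivAt.fun_sum
    intro l _
    simpa using (hasDerivAt_pow l x).const_mul (a l)
  have hud : ∀ x : ℝ, HasDerivAt u ((s:ℝ)) x := by
    intro x
    simpa [hu] using ((hasDerivAt_id x).const_mul (s:ℝ)).const_add ((n:ℝ))
  have hvd : ∀ x : ℝ, HasDerivAt (fun y => (u y)^s) ((s:ℝ) * (u x)^(s-1) * (s:ℝ)) x := by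
    intro x
    exact (hud x).pow s
  set F : ℝ → ℝ := fun x => f x / (u x)^s with hF
  have hFd : ∀ x ∈ Set.Ioo (0:ℝ) 1, HasDerivAt F
      ((g x * (u x)^s - f x * ((s:ℝ) * (u x)^(s-1) * (s:ℝ))) / ((u x)^s)^2) x := by
    intro x hx
    exact (hfd x).div (hvd x) (pow_ne_zero _ (ne_of_gt (hu_pos x (le_of_lt hx.1))))
  have hmono : MonotoneOn F (Set.Icc (0:ℝ) 1) := by
    apply monotoneOn_of_deriv_nonneg (convex_Icc (0:ℝ) 1)
    · apply ContinuousOn.div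
      · exact (continuous_finset_sum _ (fun l _ => by continuity)).continuousOn
      · exact ((continuous_const.add (continuous_const.mul continuous_id)).pow s).continuousOn
      · intro x hx
        exact pow_ne_zero _ (ne_of_gt (hu_pos x hx.1))
    · rw [interior_Icc]
      intro x hx
      exact ((hFd x hx).differentiableAt).differentiableWithinAt
    · rw [interior_Icc]
      intro x hx
      rw [(hFd x hx).deriv]
      apply div_nonneg _ (sq_nonneg _)
      have hx0 : (0:ℝ) ≤ x := le_of_lt hx.1
      have hx1 : x ≤ 1 := le_of_lt hx.2
      have hkey := wv_key n s hn hs x hx0 hx1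
      have husplit : (u x)^s = (u x)^(s-1) * u x := by
        rw [← pow_succ]; congr 1; omega
      have : g x * (u x)^s - f x * ((s:ℝ) * (u x)^(s-1) * (s:ℝ))
          = (u x)^(s-1) * (u x * g x - (s:ℝ)^2 * f x) := by
        rw [husplit]; ring
      rw [this]
      apply mul_nonneg (pow_nonneg (le_of_lt (hu_pos x hx0)) _)
      have : u x * g x = ((n:ℝ) + s*x) * g x := rfl
      simp only [hf, hgdef, hu]
      linarith [hkey]
  have hmem_t : t ∈ Set.Icc (0:ℝ) 1 := ⟨le_of_lt ht0, ht1⟩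
  have hmem_1 : (1:ℝ) ∈ Set.Icc (0:ℝ) 1 := ⟨zero_le_one, le_refl 1⟩
  have hFt := hmono hmem_t hmem_1 ht1
  have hf1 : f 1 = ((s+n).choose s : ℝ) := by
    have hcast := congrArg (fun k : ℕ => (k : ℝ)) (wv_vander n s)
    push_cast at hcast
    simp only [hf, one_pow, mul_one]
    rw [← hcast]
    all_goals exact Finset.sum_congr rfl (fun l _ => by simp only [ha])
  have hu1 : u 1 = (n:ℝ) + s := by simp [hu]
  have hut_pos : 0 < u t := hu_pos t (le_of_lt ht0)
  have hu1_pos : (0:ℝ) < (n:ℝ) + s := by rw [← hu1]; exact hu_pos 1 zero_le_one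
  simp only [hF, hf1, hu1] at hFt
  -- hFt : f t / (u t)^s ≤ ↑C / (↑n+↑s)^s
  have hgoal : f t ≤ ((s+n).choose s : ℝ) * (((n:ℝ) + s*t)/((n:ℝ)+s))^s := by
    rw [div_le_div_iff₀ (pow_pos hut_pos s) (pow_pos hu1_pos s)] at hFt
    rw [div_pow, ← mul_div_assoc, le_div_iff₀ (pow_pos hu1_pos s)]
    calc f t * ((n:ℝ)+s)^s ≤ ((s+n).choose s : ℝ) * (u t)^s := hFt
      _ = ((s+n).choose s : ℝ) * ((n:ℝ) + s*t)^s := rfl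
  exact hgoal

theorem weighted_vandermonde (m s : ℕ) (c α : ℝ) (hc : 1 < c) (hs : 0 < s)
    (hm : (m : ℝ) = c * s) (hα : 0 ≤ α) :
    ∑ l ∈ Finset.range (s + 1),
        Real.exp (-α * l) * (s.choose l : ℝ) * ((m - s).choose (s - l) : ℝ) ≤
      (m.choose s : ℝ) * (1 - 1 / c + Real.exp (-α) / c) ^ s := by
  have hs' : (0:ℝ) < s := by exact_mod_cast hs
  have hms : s < m := by
    have : (s:ℝ) < m := by rw [hm]; nlinarith
    exact_mod_cast this
  set n := m - s with hndef
  have hnm : n + s = m := by omega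
  have hn0 : 0 < n := by omega
  set t := Real.exp (-α) with htdef
  have ht0 : 0 < t := Real.exp_pos _
  have ht1 : t ≤ 1 := by
    rw [htdef, show (1:ℝ) = Real.exp 0 by simp]
    exact Real.exp_le_exp.mpr (by linarith)
  have hns : ((n:ℝ) + s) = c * s := by
    rw [← hm]
    exact_mod_cast congrArg (Nat.cast : ℕ → ℝ) hnm
  have hL : ∑ l ∈ range (s+1), Real.exp (-α*l) * (s.choose l:ℝ) * ((m-s).choose (s-l):ℝ)
      = ∑ l ∈ range (s+1), (s.choose l:ℝ) * (n.choose (s-l):ℝ) * t^l := by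
    apply Finset.sum_congr rfl
    intro l _
    have he : Real.exp (-α * l) = t^l := by
      rw [htdef, ← Real.exp_nat_mul]; congr 1; ring
    rw [he]
    ring
  have hR : (1 - 1/c + t/c) = ((n:ℝ) + s*t)/((n:ℝ)+s) := by
    have hnr : (n:ℝ) = c*s - s := by linarith
    rw [hns, hnr]
    have hc0 : c ≠ 0 := by linarith
    have hs0 : (s:ℝ) ≠ 0 := ne_of_gt hs'
    field_simp
  have hM : (m.choose s : ℝ) = ((s+n).choose s : ℝ) := by
    rw [show m = s + n by omega]
  rw [hL, hR, hM]
  exact wv_final n s hn0 hs t ht0 ht1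
end
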